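/- arXiv:1805.01329 — 5 statements merged into one kernel-verified Lean document; each statement's English description precedes it below -/
import Mathlib

section
/- Let f: ℕ → ℝ≥0 satisfy 0 < f(k) < f(k−1) + f(2) for every k ≥ 3. Then for every n ≥ 2 and every tree T with n leaves, 𝔠_{var,f}(T) ≤ ((f(0)+f(2))²/12)·(n−1)(n−2)(2n−3), with equality if and only if T is isomorphic to the comb K_n. Hence 𝔠_{var,f} attains its maximum on 𝒯*_n exactly at the comb. -/
/-- Rooted trees encoded as a root together with the list of subtrees
rooted at its children. -/
inductive MTree : Type
  | node : List MTree → MTree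

namespace MTree

/-- Number of leaves of a tree (a single node counts as one leaf). -/
def leafCount : MTree → ℕ
  | node ts => max 1 (ts.attach.map (fun x => leafCount x.1)).sum
decreasing_by
  have := List.sizeOf_lt_of_mem x.2
  simp only [node.sizeOf_spec]; omega

/-- `deltaF f T = Σ_{v ∈ V(T)} f (deg v)`, the `f`-size of `T`. -/
noncomputable def deltaF (f : ℕ → ℝ) : MTree → ℝ
  | node ts => f ts.length + (ts.attach.map (fun x => deltaF f x.1)).sum
decreasing_by
  have := List.sizeOf_lt_of_mem x.2
  simp only [node.sizeOf_spec]; omega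

/-- The Colless-like index relative to a "dissimilarity" `D` and a function `f`:
the sum, over all internal nodes `v`, of `D` applied to the list of `f`-sizes of
the subtrees rooted at the children of `v`. -/
noncomputable def cIndex (D : List ℝ → ℝ) (f : ℕ → ℝ) : MTree → ℝ
  | node ts => (if ts.isEmpty then 0 else D (ts.map (deltaF f)))
      + (ts.attach.map (fun x => cIndex D f x.1)).sum
decreasing_by
  have := List.sizeOf_lt_of_mem x.2
  simp only [node.sizeOf_spec]; omega

/-- The Colless index of a (bifurcating) tree: the sum over the internal nodes of the
absolute value of the difference of the numbers of leaves of the two child subtrees. -/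
def colless : MTree → ℕ
  | node ts =>
      (match ts with
       | [a, b] => ((a.leafCount : ℤ) - (b.leafCount : ℤ)).natAbs
       | _ => 0)
      + (ts.attach.map (fun x => colless x.1)).sum
decreasing_by
  have := List.sizeOf_lt_of_mem x.2
  simp only [node.sizeOf_spec]; omega

/-- The quadratic Colless index of a (bifurcating) tree. -/
def collessSq : MTree → ℕ
  | node ts =>
      (match ts with
       | [a, b] => ((a.leafCount : ℤ) - (b.leafCount : ℤ)).natAbs ^ 2
       | _ => 0)
      + (ts.attach.map (fun x => collessSq x.1)).sum
decreasing_by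
  have := List.sizeOf_lt_of_mem x.2
  simp only [node.sizeOf_spec]; omega

/-- A tree in the sense of the paper: no node of out-degree 1. -/
inductive WellFormed : MTree → Prop
  | node {ts : List MTree} : ts.length ≠ 1 → (∀ t ∈ ts, WellFormed t) →
      WellFormed (node ts)

/-- A bifurcating tree: every internal node has out-degree exactly 2. -/
inductive Bifurcating : MTree → Prop
  | node {ts : List MTree} : (ts.length = 0 ∨ ts.length = 2) →
      (∀ t ∈ ts, Bifurcating t) → Bifurcating (node ts)

/-- Isomorphism of (list-encoded) trees: the lists of child subtrees match up to
a permutation and recursively isomorphic subtrees. -/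
inductive Iso : MTree → MTree → Prop
  | node {ts us vs : List MTree} :
      List.Forall₂ Iso ts vs → vs.Perm us → Iso (node ts) (node us)

/-- A tree is fully symmetric when, for every internal node, the subtrees rooted at
its children are pairwise isomorphic. -/
inductive FullySymmetric : MTree → Prop
  | node {ts : List MTree} : (∀ s ∈ ts, ∀ t ∈ ts, Iso s t) →
      (∀ t ∈ ts, FullySymmetric t) → FullySymmetric (node ts)

/-- The comb `K_n` with `n ≥ 1` leaves. -/
def comb : ℕ → MTree
  | 0 => node []
  | 1 => node []
  | n + 2 => node [node [], comb (n + 1)]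

/-- The star `FS_n`, whose root has `n` children, all of them leaves. -/
def star (n : ℕ) : MTree := node (List.replicate n (node []))

/-- The median of a list of real numbers. -/
noncomputable def median (l : List ℝ) : ℝ :=
  let s := l.mergeSort (fun a b => a ≤ b)
  if l.length % 2 = 1 then s.getD (l.length / 2) 0
  else (s.getD (l.length / 2 - 1) 0 + s.getD (l.length / 2) 0) / 2

/-- The mean deviation from the median of a list of real numbers. -/
noncomputable def MDM (l : List ℝ) : ℝ :=
  (l.map (fun x => |x - median l|)).sum / l.length

/-- The sample variance of a list of real numbers. -/
noncomputable def svar (l : List ℝ) : ℝ :=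
  (l.map (fun x => (x - l.sum / l.length) ^ 2)).sum / ((l.length : ℝ) - 1)

/-- The sample standard deviation of a list of real numbers. -/
noncomputable def ssd (l : List ℝ) : ℝ := Real.sqrt (svar l)

end MTree

namespace MTree

theorem strongInd (P : MTree → Prop) (h : ∀ ts : List MTree, (∀ t ∈ ts, P t) → P (node ts)) :
    ∀ T, P T := by
  suffices hh : ∀ N T, sizeOf T ≤ N → P T by exact fun T => hh (sizeOf T) T le_rfl
  intro N
  induction N with
  | zero => intro T hs; obtain ⟨ts⟩ := T; simp [node.sizeOf_spec] at hs
  | succ N ih =>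
      intro T hs
      obtain ⟨ts⟩ := T
      refine h ts fun t ht => ih t ?_
      have := List.sizeOf_lt_of_mem ht
      simp only [node.sizeOf_spec] at hs
      omega

theorem leafCount_node (ts : List MTree) :
    leafCount (node ts) = max 1 (ts.map leafCount).sum := by
  rw [leafCount]; exact congrArg _ (congrArg List.sum (List.attach_map_val (l := ts)))

theorem deltaF_node (f : ℕ → ℝ) (ts : List MTree) :
    deltaF f (node ts) = f ts.length + (ts.map (deltaF f)).sum := by
  rw [deltaF]; exact congrArg _ (congrArg List.sum (List.attach_map_val (l := ts)))

theorem cIndex_node (D : List ℝ → ℝ) (f : ℕ → ℝ) (ts : List MTree) :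
    cIndex D f (node ts) = (if ts.isEmpty then 0 else D (ts.map (deltaF f)))
      + (ts.map (cIndex D f)).sum := by
  rw [cIndex]; exact congrArg _ (congrArg List.sum (List.attach_map_val (l := ts)))

theorem one_le_leafCount (T : MTree) : 1 ≤ leafCount T := by
  obtain ⟨ts⟩ := T; rw [leafCount_node]; exact le_max_left _ _

theorem length_le_sum_leaf (ts : List MTree) :
    ts.length ≤ (ts.map leafCount).sum := by
  induction ts with
  | nil => simp
  | cons a l ih =>
      simp only [List.map_cons, List.sum_cons, List.length_cons]
      have := one_le_leafCount a
      omega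

theorem leafCount_node_of_ne_nil {ts : List MTree} (h : ts ≠ []) :
    leafCount (node ts) = (ts.map leafCount).sum := by
  rw [leafCount_node]
  have h1 : 1 ≤ ts.length := by
    cases ts with | nil => simp at h | cons a l => simp
  have := length_le_sum_leaf ts
  omega

theorem eq_leaf_of_leafCount_eq_one {T : MTree} (hT : WellFormed T)
    (h : leafCount T = 1) : T = node [] := by
  obtain ⟨ts⟩ := T
  cases ts with
  | nil => rfl
  | cons a l =>
      cases hT with
      | node hlen _ =>
        exfalso
        rw [leafCount_node_of_ne_nil (by simp)] at h
        have h2 : 2 ≤ (a :: l).length := by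
          simp only [List.length_cons]
          cases l with | nil => simp at hlen | cons b m => simp
        have := length_le_sum_leaf (a :: l)
        omega

end MTree

namespace MTree

/-- Auxiliary polynomial `H m = (m-1)(m-2)(2m-3)/12`. -/
noncomputable def Hp (m : ℕ) : ℝ := ((m:ℝ) - 1) * ((m:ℝ) - 2) * (2*(m:ℝ) - 3) / 12

/-- Auxiliary polynomial `G m = H m + (m-1)^2/2`. -/
noncomputable def Gp (m : ℕ) : ℝ := Hp m + ((m:ℝ) - 1)^2 / 2

theorem Hp_one : Hp 1 = 0 := by simp [Hp]

theorem Gp_add (a b : ℕ) (ha : 1 ≤ a) (hb : 1 ≤ b) :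
    Gp a + Gp b + 1/2 ≤ Gp (a + b) := by
  have ha' : (1:ℝ) ≤ a := by exact_mod_cast ha
  have hb' : (1:ℝ) ≤ b := by exact_mod_cast hb
  have : Gp (a+b) - Gp a - Gp b = (a:ℝ) * b * ((a:ℝ) + b - 1) / 2 := by
    simp only [Gp, Hp]; push_cast; ring
  nlinarith [mul_le_mul ha' hb' (by linarith) (by linarith : (0:ℝ) ≤ (a:ℝ))]

theorem Gp_add_le_Hp (a b : ℕ) (ha : 1 ≤ a) (hb : 1 ≤ b) :
    Gp a + Gp b ≤ Hp (a + b) := by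
  have ha' : (1:ℝ) ≤ a := by exact_mod_cast ha
  have hb' : (1:ℝ) ≤ b := by exact_mod_cast hb
  have : Hp (a+b) - Gp a - Gp b = ((a:ℝ) - 1) * ((b:ℝ) - 1) * ((a:ℝ) + b - 1) / 2 := by
    simp only [Gp, Hp]; push_cast; ring
  nlinarith [mul_nonneg (mul_nonneg (by linarith : (0:ℝ) ≤ (a:ℝ)-1) (by linarith : (0:ℝ) ≤ (b:ℝ)-1)) (by linarith : (0:ℝ) ≤ (a:ℝ)+b-1)]

theorem Hp_pair (a b : ℕ) (ha : 1 ≤ a) (hab : a ≤ b) :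
    ((b:ℝ) - 1)^2/2 + Hp a + Hp b ≤ Hp (a + b) := by
  have ha' : (1:ℝ) ≤ a := by exact_mod_cast ha
  have hab' : (a:ℝ) ≤ b := by exact_mod_cast hab
  have : Hp (a+b) - Hp a - Hp b - ((b:ℝ)-1)^2/2
      = (b:ℝ) * ((a:ℝ) - 1) * ((a:ℝ) + b - 2) / 2 := by
    simp only [Hp]; push_cast; ring
  nlinarith [mul_nonneg (mul_nonneg (by linarith : (0:ℝ) ≤ (b:ℝ)) (by linarith : (0:ℝ) ≤ (a:ℝ)-1)) (by linarith : (0:ℝ) ≤ (a:ℝ)+b-2)]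

theorem Hp_pair_strict (a b : ℕ) (ha : 2 ≤ a) (hab : a ≤ b) :
    ((b:ℝ) - 1)^2/2 + Hp a + Hp b < Hp (a + b) := by
  have ha' : (2:ℝ) ≤ a := by exact_mod_cast ha
  have hab' : (a:ℝ) ≤ b := by exact_mod_cast hab
  have : Hp (a+b) - Hp a - Hp b - ((b:ℝ)-1)^2/2
      = (b:ℝ) * ((a:ℝ) - 1) * ((a:ℝ) + b - 2) / 2 := by
    simp only [Hp]; push_cast; ring
  nlinarith [mul_pos (mul_pos (by linarith : (0:ℝ) < (b:ℝ)) (by linarith : (0:ℝ) < (a:ℝ)-1)) (by linarith : (0:ℝ) < (a:ℝ)+b-2)]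

theorem Hp_succ (b : ℕ) (hb : 1 ≤ b) : Hp (b + 1) = Hp b + ((b:ℝ) - 1)^2/2 := by
  simp only [Hp]; push_cast; ring

/-- Sum of `Gp` over a nonempty list is at most `Gp` of the sum; strict gain for length ≥ 2. -/
theorem sum_Gp_le (l : List ℕ) (h1 : ∀ x ∈ l, 1 ≤ x) (hne : l ≠ []) :
    (l.map Gp).sum ≤ Gp l.sum ∧ (2 ≤ l.length → (l.map Gp).sum + 1/2 ≤ Gp l.sum) := by
  induction l with
  | nil => simp at hne
  | cons a t ih =>
      cases t with
      | nil => simp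
      | cons b u =>
          have h1' : ∀ x ∈ b :: u, 1 ≤ x := fun x hx => h1 x (List.mem_cons_of_mem a hx)
          obtain ⟨ih1, _⟩ := ih h1' (by simp)
          have ha : 1 ≤ a := h1 a (List.mem_cons_self)
          have hsum : 1 ≤ (b :: u).sum := by
            have := h1' b (List.mem_cons_self)
            have : b ≤ (b :: u).sum := by simp [List.sum_cons]
            omega
          have key := Gp_add a (b :: u).sum ha hsum
          constructor
          · simp only [List.map_cons, List.sum_cons] at *
            linarith
          · intro _
            simp only [List.map_cons, List.sum_cons] at *
            linarith

theorem sum_Gp_lt_Hp (l : List ℕ) (h1 : ∀ x ∈ l, 1 ≤ x) (h3 : 3 ≤ l.length) :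
    (l.map Gp).sum + 1/2 ≤ Hp l.sum := by
  cases l with
  | nil => simp at h3
  | cons a t =>
      have ht : t ≠ [] := by intro h; rw [h] at h3; simp at h3
      have h1' : ∀ x ∈ t, 1 ≤ x := fun x hx => h1 x (List.mem_cons_of_mem a hx)
      obtain ⟨_, ih2⟩ := sum_Gp_le t h1' ht
      have hlt : 2 ≤ t.length := by simp at h3; omega
      have ha : 1 ≤ a := h1 a (List.mem_cons_self)
      have hts : 1 ≤ t.sum := by
        cases t with
        | nil => simp at ht
        | cons b u =>
            have := h1' b (List.mem_cons_self)
            simp [List.sum_cons]; omega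
      have key := Gp_add_le_Hp a t.sum ha hts
      simp only [List.map_cons, List.sum_cons]
      linarith [ih2 hlt]

end MTree

namespace MTree

theorem svar_pair (x y : ℝ) : svar [x, y] = (x - y)^2/2 := by
  simp [svar]; ring

theorem sum_sq_expand (l : List ℝ) (a : ℝ) :
    (l.map fun x => (x - a)^2).sum
      = (l.map fun x => x^2).sum - 2*a*l.sum + (l.length : ℝ) * a^2 := by
  induction l with
  | nil => simp
  | cons x t ih =>
      simp only [List.map_cons, List.sum_cons, ih, List.length_cons]
      push_cast; ring

theorem svar_le_sq (l : List ℝ) (c : ℝ) (h2 : 2 ≤ l.length) :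
    svar l ≤ (l.map fun x => (x - c)^2).sum / ((l.length:ℝ) - 1) := by
  have hk : (2:ℝ) ≤ (l.length : ℝ) := by exact_mod_cast h2
  have hk0 : (0:ℝ) < (l.length : ℝ) := by linarith
  have hk1 : (0:ℝ) < (l.length:ℝ) - 1 := by linarith
  rw [svar]
  apply (div_le_div_iff_of_pos_right hk1).mpr
  rw [sum_sq_expand, sum_sq_expand]
  have key : 2 * (l.sum / (l.length:ℝ)) * l.sum - (l.length:ℝ) * (l.sum / (l.length:ℝ))^2
      = l.sum^2 / (l.length:ℝ) := by
    field_simp; ring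
  have key2 : 2*c*l.sum - (l.length:ℝ)*c^2 ≤ l.sum^2 / (l.length:ℝ) := by
    rw [le_div_iff₀ hk0]
    nlinarith [sq_nonneg ((l.length:ℝ)*c - l.sum)]
  linarith

example (l : List MTree) (f g : MTree → ℝ) (h : ∀ i ∈ l, f i ≤ g i) :
    (l.map f).sum ≤ (l.map g).sum := List.sum_le_sum h

end MTree

namespace MTree

theorem map_eq_of_forall₂ {β : Type*} {g : MTree → β}
    {l₁ l₂ : List MTree} (h : List.Forall₂ Iso l₁ l₂)
    (hg : ∀ a ∈ l₁, ∀ b, Iso a b → g a = g b) : l₁.map g = l₂.map g := by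
  induction h with
  | nil => rfl
  | @cons a b t₁ t₂ hab _ ih =>
      simp only [List.map_cons]
      rw [hg a (List.mem_cons_self) b hab,
        ih fun x hx => hg x (List.mem_cons_of_mem a hx)]

theorem svar_perm {l l' : List ℝ} (h : l.Perm l') : svar l = svar l' := by
  rw [svar, svar, h.length_eq, h.sum_eq, (h.map _).sum_eq]

theorem iso_invariant (f : ℕ → ℝ) :
    ∀ T, ∀ U, Iso T U → leafCount T = leafCount U ∧ deltaF f T = deltaF f U ∧
      cIndex svar f T = cIndex svar f U := by
  refine strongInd _ ?_
  intro ts ih U hIso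
  cases hIso with
  | @node _ us vs h2 hperm =>
      have hlen : ts.length = us.length := h2.length_eq.trans hperm.length_eq
      have hmap : ∀ (g : MTree → ℝ), (∀ a ∈ ts, ∀ b, Iso a b → g a = g b) →
          (ts.map g).sum = (us.map g).sum := by
        intro g hg
        rw [map_eq_of_forall₂ h2 hg, (hperm.map g).sum_eq]
      have hleaf : (ts.map leafCount).sum = (us.map leafCount).sum := by
        rw [map_eq_of_forall₂ h2 (fun a ha b hb => (ih a ha b hb).1),
          (hperm.map leafCount).sum_eq]
      have hdeltaL : ts.map (deltaF f) = vs.map (deltaF f) :=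
        map_eq_of_forall₂ h2 (fun a ha b hb => (ih a ha b hb).2.1)
      have hdelta : (ts.map (deltaF f)).sum = (us.map (deltaF f)).sum := by
        rw [hdeltaL, (hperm.map (deltaF f)).sum_eq]
      refine ⟨?_, ?_, ?_⟩
      · rw [leafCount_node, leafCount_node, hleaf]
      · rw [deltaF_node, deltaF_node, hlen, hdelta]
      · rw [cIndex_node, cIndex_node]
        have hempty : ts.isEmpty = us.isEmpty := by
          cases ts with
          | nil => cases us with
            | nil => rfl
            | cons a l => simp at hlen
          | cons a l => cases us with
            | nil => simp at hlen
            | cons b m => rfl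
        rw [hempty, hmap (cIndex svar f) (fun a ha b hb => (ih a ha b hb).2.2)]
        congr 1
        by_cases hts : us.isEmpty
        · simp [hts]
        · simp only [hts, if_false]
          rw [hdeltaL]
          exact svar_perm (hperm.map (deltaF f))

theorem comb_leafCount (n : ℕ) : leafCount (comb (n+1)) = n + 1 := by
  induction n with
  | zero => simp [comb, leafCount_node]
  | succ m ih =>
      show leafCount (node [node [], comb (m+1)]) = m + 2
      rw [leafCount_node_of_ne_nil (by simp)]
      simp [leafCount_node, ih]; omega

theorem comb_wellFormed (n : ℕ) : WellFormed (comb n) := by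
  induction n with
  | zero => exact WellFormed.node (by simp) (by simp)
  | succ m ih =>
      cases m with
      | zero => exact WellFormed.node (by simp) (by simp)
      | succ k =>
          show WellFormed (node [node [], comb (k+1)])
          refine WellFormed.node (by simp) ?_
          intro t ht
          simp at ht
          rcases ht with h | h
          · rw [h]; exact WellFormed.node (by simp) (by simp)
          · rw [h]; exact ih

end MTree

namespace MTree

theorem sum_map_affine (l : List MTree) (g : MTree → ℝ) (a b : ℝ) :
    (l.map fun t => a * g t + b).sum = a * (l.map g).sum + l.length * b := by
  induction l with
  | nil => simp
  | cons x t ih =>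
      simp only [List.map_cons, List.sum_cons, ih, List.length_cons]
      push_cast; ring

theorem cast_leaf_sum (ts : List MTree) :
    (((ts.map leafCount).sum : ℕ) : ℝ) = (ts.map fun t => ((leafCount t : ℕ) : ℝ)).sum := by
  rw [Nat.cast_list_sum, List.map_map]; rfl

section F
variable (f : ℕ → ℝ) (hf0 : ∀ n, 0 ≤ f n)
    (hf : ∀ k, 3 ≤ k → 0 < f k ∧ f k < f (k - 1) + f 2)

include hf in
theorem f2_pos : 0 < f 2 := by
  obtain ⟨h1, h2⟩ := hf 3 (by norm_num)
  norm_num at h2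
  linarith

include hf0 hf in
theorem fk_le : ∀ k, 2 ≤ k → f k ≤ ((k:ℝ) - 1) * f 2 := by
  intro k hk
  induction k, hk using Nat.le_induction with
  | base => norm_num
  | succ k hk ih =>
      obtain ⟨_, h2⟩ := hf (k+1) (by omega)
      have hk1 : k + 1 - 1 = k := by omega
      rw [hk1] at h2
      push_cast
      linarith

include hf0 in
theorem delta_lb : ∀ T : MTree, f 0 * (leafCount T : ℝ) ≤ deltaF f T := by
  refine strongInd _ ?_
  intro ts ih
  rw [deltaF_node, leafCount_node]
  rcases eq_or_ne ts [] with h | h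
  · subst h; simp
  · have hmax : max 1 (ts.map leafCount).sum = (ts.map leafCount).sum := by
      have h1 : 1 ≤ ts.length := by cases ts with | nil => simp at h | cons a l => simp
      have := length_le_sum_leaf ts
      omega
    rw [hmax]
    have hsum : (ts.map fun t => f 0 * ((leafCount t : ℕ) : ℝ)).sum ≤ (ts.map (deltaF f)).sum :=
      List.sum_le_sum fun t ht => ih t ht
    have he : (ts.map fun t => f 0 * ((leafCount t : ℕ) : ℝ)).sum
        = f 0 * (((ts.map leafCount).sum : ℕ) : ℝ) := by
      rw [cast_leaf_sum]
      have := sum_map_affine ts (fun t => ((leafCount t : ℕ) : ℝ)) (f 0) 0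
      simpa using this
    have hfk := hf0 ts.length
    linarith

include hf0 hf in
theorem delta_ub : ∀ T : MTree, WellFormed T →
    deltaF f T ≤ (f 0 + f 2) * (leafCount T : ℝ) - f 2 := by
  refine strongInd _ ?_
  intro ts ih hT
  cases hT with
  | node hlen hwf =>
    rw [deltaF_node, leafCount_node]
    rcases eq_or_ne ts [] with h | h
    · subst h; simp
    · have h1 : 1 ≤ ts.length := by cases ts with | nil => simp at h | cons a l => simp
      have hk2 : 2 ≤ ts.length := by omega
      have hmax : max 1 (ts.map leafCount).sum = (ts.map leafCount).sum := by
        have := length_le_sum_leaf ts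
        omega
      rw [hmax]
      have hsum : (ts.map (deltaF f)).sum
          ≤ (ts.map fun t => (f 0 + f 2) * ((leafCount t : ℕ) : ℝ) + (- f 2)).sum :=
        List.sum_le_sum fun t ht => by
          have := ih t ht (hwf t ht); linarith
      rw [sum_map_affine, ← cast_leaf_sum] at hsum
      have hfk : f ts.length ≤ ((ts.length : ℝ) - 1) * f 2 := fk_le f hf0 hf ts.length hk2
      have : (1:ℝ) ≤ (ts.length : ℝ) := by exact_mod_cast h1
      linarith

include hf in
theorem comb_delta (n : ℕ) : deltaF f (comb (n+1)) = (f 0 + f 2) * ((n:ℝ)+1) - f 2 := by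
  induction n with
  | zero => show deltaF f (node []) = _ ; rw [deltaF_node]; simp
  | succ m ih =>
      show deltaF f (node [node [], comb (m+1)]) = _
      rw [deltaF_node]
      simp only [List.map_cons, List.map_nil, List.sum_cons, List.sum_nil, List.length_cons,
        List.length_nil]
      rw [deltaF_node]
      simp only [List.map_nil, List.sum_nil, List.length_nil]
      rw [ih]
      push_cast; ring

include hf in
theorem comb_cIndex (n : ℕ) :
    cIndex svar f (comb (n+1)) = (f 0 + f 2)^2 * Hp (n+1) := by
  induction n with
  | zero =>
      show cIndex svar f (node []) = _
      rw [cIndex_node, Hp_one]; simp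
  | succ m ih =>
      show cIndex svar f (node [node [], comb (m+1)]) = _
      rw [cIndex_node]
      simp only [List.map_cons, List.map_nil, List.sum_cons, List.sum_nil, List.isEmpty_cons,
        if_false]
      rw [cIndex_node]
      simp only [List.map_nil, List.sum_nil, List.isEmpty_nil, if_true]
      rw [ih, comb_delta f hf]
      have hd0 : deltaF f (node []) = f 0 := by rw [deltaF_node]; simp
      rw [hd0, svar_pair]
      rw [Hp_succ (m+1) (by omega)]
      push_cast
      ring
end F

end MTree

namespace MTree

theorem iso_refl : ∀ T : MTree, Iso T T := by
  refine strongInd _ ?_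
  intro ts ih
  refine Iso.node ?_ (List.Perm.refl ts)
  induction ts with
  | nil => exact List.Forall₂.nil
  | cons a t iht =>
      exact List.Forall₂.cons (ih a (List.mem_cons_self))
        (iht fun x hx => ih x (List.mem_cons_of_mem a hx))

theorem iso_swap {x y U : MTree} (h : Iso (node [x, y]) U) : Iso (node [y, x]) U := by
  cases h with
  | @node _ us vs h2 hperm =>
      cases h2 with
      | cons h1 h2' =>
          cases h2' with
          | cons hy h3 =>
              cases h3
              refine Iso.node (List.Forall₂.cons hy (List.Forall₂.cons h1 List.Forall₂.nil))
                (List.Perm.trans ?_ hperm)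
              exact List.Perm.swap _ _ _

theorem cIndex_pair_swap (f : ℕ → ℝ) (x y : MTree) :
    cIndex svar f (node [x, y]) = cIndex svar f (node [y, x]) := by
  rw [cIndex_node, cIndex_node]
  simp only [List.map_cons, List.map_nil, List.sum_cons, List.sum_nil, List.isEmpty_cons,
    if_false]
  rw [svar_pair, svar_pair]
  ring

theorem leafCount_pair_swap (x y : MTree) :
    leafCount (node [x, y]) = leafCount (node [y, x]) := by
  rw [leafCount_node, leafCount_node]
  simp only [List.map_cons, List.map_nil, List.sum_cons, List.sum_nil]
  omega

theorem comb_pair (m : ℕ) (hm : 1 ≤ m) : comb (m + 1) = node [node [], comb m] := by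
  obtain ⟨j, rfl⟩ : ∃ j, m = j + 1 := ⟨m - 1, by omega⟩
  rfl

section F
variable (f : ℕ → ℝ) (hf0 : ∀ n, 0 ≤ f n)
    (hf : ∀ k, 3 ≤ k → 0 < f k ∧ f k < f (k - 1) + f 2)

include hf0 hf in
theorem s_pos : 0 < f 0 + f 2 := by
  have := f2_pos f hf
  have := hf0 0
  linarith

include hf0 hf in
theorem pair_arith {x y : ℝ} {p q : ℕ} (hp : 1 ≤ p) (hq : 1 ≤ q) (hpq : p ≤ q)
    (hx1 : f 0 * (p:ℝ) ≤ x) (hx2 : x ≤ (f 0 + f 2) * (p:ℝ) - f 2)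
    (hy1 : f 0 * (q:ℝ) ≤ y) (hy2 : y ≤ (f 0 + f 2) * (q:ℝ) - f 2) :
    (x - y)^2/2 ≤ (f 0 + f 2)^2 * ((q:ℝ) - 1)^2 / 2 := by
  have hp' : (1:ℝ) ≤ (p:ℝ) := by exact_mod_cast hp
  have hq' : (1:ℝ) ≤ (q:ℝ) := by exact_mod_cast hq
  have hpq' : (p:ℝ) ≤ (q:ℝ) := by exact_mod_cast hpq
  have h2 := f2_pos f hf
  have h0 := hf0 0
  have hs : 0 ≤ f 0 + f 2 := by linarith
  have hub : x - y ≤ (f 0 + f 2) * ((q:ℝ) - 1) := by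
    nlinarith [mul_nonneg h0 (by linarith : (0:ℝ) ≤ (q:ℝ) - 1),
      mul_le_mul_of_nonneg_left hpq' hs]
  have hlb : -((f 0 + f 2) * ((q:ℝ) - 1)) ≤ x - y := by
    nlinarith [mul_nonneg h0 (by linarith : (0:ℝ) ≤ (p:ℝ) - 1)]
  have hsq : (x - y)^2 ≤ ((f 0 + f 2) * ((q:ℝ) - 1))^2 := sq_le_sq' hlb hub
  nlinarith [hsq]

include hf0 hf in
theorem elem_sq_arith {x : ℝ} {p : ℕ} (hp : 1 ≤ p)
    (hx1 : f 0 * (p:ℝ) ≤ x) (hx2 : x ≤ (f 0 + f 2) * (p:ℝ) - f 2) :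
    (x - f 0)^2 ≤ (f 0 + f 2)^2 * ((p:ℝ) - 1)^2 := by
  have hp' : (1:ℝ) ≤ (p:ℝ) := by exact_mod_cast hp
  have h2 := f2_pos f hf
  have h0 := hf0 0
  have hub : x - f 0 ≤ (f 0 + f 2) * ((p:ℝ) - 1) := by nlinarith
  have hlb : 0 ≤ x - f 0 := by nlinarith [mul_nonneg h0 (by linarith : (0:ℝ) ≤ (p:ℝ) - 1)]
  nlinarith

end F

end MTree

namespace MTree

theorem sum_map_add (l : List MTree) (g h : MTree → ℝ) :
    (l.map fun t => g t + h t).sum = (l.map g).sum + (l.map h).sum := by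
  induction l with
  | nil => simp
  | cons x t ih => simp only [List.map_cons, List.sum_cons, ih]; ring

theorem sum_map_mul (l : List MTree) (g : MTree → ℝ) (c : ℝ) :
    (l.map fun t => c * g t).sum = c * (l.map g).sum := by
  have := sum_map_affine l g c 0
  simpa using this

section F
variable (f : ℕ → ℝ) (hf0 : ∀ n, 0 ≤ f n)
    (hf : ∀ k, 3 ≤ k → 0 < f k ∧ f k < f (k - 1) + f 2)

include hf0 hf in
theorem pair_main (a b : MTree) (ha : WellFormed a) (hb : WellFormed b)
    (hab : leafCount a ≤ leafCount b)
    (IHa : cIndex svar f a ≤ (f 0 + f 2)^2 * Hp (leafCount a) ∧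
      (cIndex svar f a = (f 0 + f 2)^2 * Hp (leafCount a) ↔ Iso a (comb (leafCount a))))
    (IHb : cIndex svar f b ≤ (f 0 + f 2)^2 * Hp (leafCount b) ∧
      (cIndex svar f b = (f 0 + f 2)^2 * Hp (leafCount b) ↔ Iso b (comb (leafCount b)))) :
    cIndex svar f (node [a, b]) ≤ (f 0 + f 2)^2 * Hp (leafCount (node [a, b])) ∧
    (cIndex svar f (node [a, b]) = (f 0 + f 2)^2 * Hp (leafCount (node [a, b])) ↔
      Iso (node [a, b]) (comb (leafCount (node [a, b])))) := by
  have h1a := one_le_leafCount a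
  have h1b := one_le_leafCount b
  have hm : leafCount (node [a, b]) = leafCount a + leafCount b := by
    rw [leafCount_node_of_ne_nil (by simp)]; simp
  have hc : cIndex svar f (node [a, b])
      = (deltaF f a - deltaF f b)^2/2 + (cIndex svar f a + cIndex svar f b) := by
    rw [cIndex_node]
    simp only [List.map_cons, List.map_nil, List.sum_cons, List.sum_nil, List.isEmpty_cons,
      Bool.false_eq_true, if_false]
    rw [svar_pair]; ring
  have hV := pair_arith f hf0 hf h1a h1b hab (delta_lb f hf0 a) (delta_ub f hf0 hf a ha)
    (delta_lb f hf0 b) (delta_ub f hf0 hf b hb)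
  have hMa := IHa.1
  have hMb := IHb.1
  have hpair : (f 0 + f 2)^2 * (((leafCount b : ℝ) - 1)^2/2 + Hp (leafCount a)
      + Hp (leafCount b)) ≤ (f 0 + f 2)^2 * Hp (leafCount a + leafCount b) :=
    mul_le_mul_of_nonneg_left (Hp_pair _ _ h1a hab) (sq_nonneg _)
  rw [hm]
  constructor
  · rw [hc]; nlinarith [hpair]
  constructor
  · intro heq
    rw [hc] at heq
    have hca : cIndex svar f a = (f 0 + f 2)^2 * Hp (leafCount a) := by nlinarith
    have hcb : cIndex svar f b = (f 0 + f 2)^2 * Hp (leafCount b) := by nlinarith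
    have hn1 : leafCount a = 1 := by
      by_contra hcontra
      have h2 : 2 ≤ leafCount a := by omega
      have hsp : (0:ℝ) < (f 0 + f 2)^2 := pow_pos (s_pos f hf0 hf) 2
      have hstrict := mul_lt_mul_of_pos_left (Hp_pair_strict _ _ h2 hab) hsp
      nlinarith
    have ha' : a = node [] := eq_leaf_of_leafCount_eq_one ha hn1
    have hIb : Iso b (comb (leafCount b)) := IHb.2.mp hcb
    have hco : comb (leafCount a + leafCount b) = node [node [], comb (leafCount b)] := by
      rw [hn1, Nat.add_comm]
      exact comb_pair _ h1b
    rw [hco, ha']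
    exact Iso.node (List.Forall₂.cons (iso_refl (node []))
      (List.Forall₂.cons hIb List.Forall₂.nil)) (List.Perm.refl _)
  · intro hIso
    have := (iso_invariant f (node [a, b]) _ hIso).2.2
    rw [this]
    obtain ⟨j, hj⟩ : ∃ j, leafCount a + leafCount b = j + 1 := ⟨leafCount a + leafCount b - 1, by omega⟩
    rw [hj, comb_cIndex f hf j]

end F

end MTree

namespace MTree

section F
variable (f : ℕ → ℝ) (hf0 : ∀ n, 0 ≤ f n)
    (hf : ∀ k, 3 ≤ k → 0 < f k ∧ f k < f (k - 1) + f 2)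

include hf0 hf in
theorem main_all : ∀ T : MTree, WellFormed T →
    cIndex svar f T ≤ (f 0 + f 2)^2 * Hp (leafCount T) ∧
    (cIndex svar f T = (f 0 + f 2)^2 * Hp (leafCount T) ↔ Iso T (comb (leafCount T))) := by
  refine strongInd _ ?_
  intro ts ih hT
  cases hT with
  | node hlen hwf =>
  match ts, hlen, hwf, ih with
  | [], _, _, _ =>
      have hl : leafCount (node ([] : List MTree)) = 1 := by rw [leafCount_node]; simp
      have hcz : cIndex svar f (node ([] : List MTree)) = 0 := by rw [cIndex_node]; simp
      rw [hl, hcz, Hp_one]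
      refine ⟨by simp, ?_, ?_⟩
      · intro _; exact iso_refl (node [])
      · intro _; simp
  | [x], hlen, _, _ => simp at hlen
  | [x, y], _, hwf, ih =>
      have hx : WellFormed x := hwf x (by simp)
      have hy : WellFormed y := hwf y (by simp)
      have IHx := ih x (by simp) hx
      have IHy := ih y (by simp) hy
      by_cases hord : leafCount x ≤ leafCount y
      · exact pair_main f hf0 hf x y hx hy hord IHx IHy
      · have hord' : leafCount y ≤ leafCount x := le_of_not_ge hord
        have H := pair_main f hf0 hf y x hy hx hord' IHy IHx
        rw [cIndex_pair_swap f x y, leafCount_pair_swap x y]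
        refine ⟨H.1, ?_, ?_⟩
        · intro h
          exact iso_swap (H.2.mp h)
        · intro h
          exact H.2.mpr (iso_swap h)
  | x :: y :: z :: l3, _, hwf, ih =>
      set ts := x :: y :: z :: l3 with hts
      have hk3 : 3 ≤ ts.length := by simp [hts]
      have hm : leafCount (node ts) = (ts.map leafCount).sum :=
        leafCount_node_of_ne_nil (by simp [hts])
      have hLlen : (ts.map leafCount).length = ts.length := List.length_map _
      have hL1 : ∀ v ∈ ts.map leafCount, 1 ≤ v := by
        intro v hv
        obtain ⟨t, _, rfl⟩ := List.mem_map.mp hv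
        exact one_le_leafCount t
      have hlen' : 2 ≤ (ts.map (deltaF f)).length := by
        rw [List.length_map]; omega
      have hsv := svar_le_sq (ts.map (deltaF f)) (f 0) hlen'
      rw [List.map_map] at hsv
      have hA : ((ts.map fun t => (deltaF f t - f 0)^2) : List ℝ).sum
          ≤ (ts.map fun t => (f 0 + f 2)^2 * ((leafCount t : ℝ) - 1)^2).sum := by
        refine List.sum_le_sum ?_
        intro t ht
        exact elem_sq_arith f hf0 hf (one_le_leafCount t) (delta_lb f hf0 t)
          (delta_ub f hf0 hf t (hwf t ht))
      have hA0 : (0:ℝ) ≤ ((ts.map fun t => (deltaF f t - f 0)^2) : List ℝ).sum := by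
        refine List.sum_nonneg ?_
        intro v hv
        obtain ⟨t, _, rfl⟩ := List.mem_map.mp hv
        positivity
      have hklen : (2:ℝ) ≤ ((ts.map (deltaF f)).length : ℝ) - 1 := by
        rw [List.length_map]
        have : (3:ℝ) ≤ (ts.length : ℝ) := by exact_mod_cast hk3
        linarith
      have hmono : ((ts.map fun t => (deltaF f t - f 0)^2) : List ℝ).sum
            / (((ts.map (deltaF f)).length : ℝ) - 1)
          ≤ ((ts.map fun t => (deltaF f t - f 0)^2) : List ℝ).sum / 2 := by
        apply div_le_div_of_nonneg_left hA0 (by norm_num) hklen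
      have hsv2 : svar (ts.map (deltaF f))
          ≤ (ts.map fun t => (f 0 + f 2)^2 * ((leafCount t : ℝ) - 1)^2).sum / 2 :=
        le_trans hsv (le_trans hmono (by linarith))
      have hchild : ((ts.map (cIndex svar f)) : List ℝ).sum
          ≤ (ts.map fun t => (f 0 + f 2)^2 * Hp (leafCount t)).sum :=
        List.sum_le_sum fun t ht => (ih t ht (hwf t ht)).1
      have hpt1 : ∀ t ∈ ts, (f 0 + f 2)^2 * (((leafCount t : ℝ) - 1)^2 / 2)
          = (1/2) * ((f 0 + f 2)^2 * ((leafCount t : ℝ) - 1)^2) := fun t _ => by ring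
      have hsum1 : (ts.map fun t => (f 0 + f 2)^2 * ((leafCount t : ℝ) - 1)^2).sum / 2
          = (ts.map fun t => (f 0 + f 2)^2 * (((leafCount t : ℝ) - 1)^2 / 2)).sum := by
        have e2 := sum_map_mul ts (fun t => ((leafCount t : ℝ) - 1)^2) ((f 0 + f 2)^2)
        have e3 := sum_map_mul ts
          (fun t => (f 0 + f 2)^2 * ((leafCount t : ℝ) - 1)^2) (1/2)
        rw [List.map_congr_left hpt1, e3, e2]
        ring
      have hpt2 : ∀ t ∈ ts, (f 0 + f 2)^2 * (((leafCount t : ℝ) - 1)^2 / 2)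
            + (f 0 + f 2)^2 * Hp (leafCount t) = (f 0 + f 2)^2 * Gp (leafCount t) :=
        fun t _ => by simp only [Gp]; ring
      have hsum2 : (ts.map fun t => (f 0 + f 2)^2 * (((leafCount t : ℝ) - 1)^2 / 2)).sum
            + (ts.map fun t => (f 0 + f 2)^2 * Hp (leafCount t)).sum
          = (ts.map fun t => (f 0 + f 2)^2 * Gp (leafCount t)).sum := by
        rw [← sum_map_add, List.map_congr_left hpt2]
      have hsum3 : (ts.map fun t => (f 0 + f 2)^2 * Gp (leafCount t)).sum
          = (f 0 + f 2)^2 * ((ts.map leafCount).map Gp).sum := by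
        rw [sum_map_mul, List.map_map]
        rfl
      have hGH := sum_Gp_lt_Hp (ts.map leafCount) hL1 (by rw [hLlen]; exact hk3)
      have hsp : (0:ℝ) < (f 0 + f 2)^2 := pow_pos (s_pos f hf0 hf) 2
      have hfinal : (f 0 + f 2)^2 * ((ts.map leafCount).map Gp).sum
          < (f 0 + f 2)^2 * Hp ((ts.map leafCount).sum) :=
        mul_lt_mul_of_pos_left (by linarith) hsp
      have hcid : cIndex svar f (node ts)
          = svar (ts.map (deltaF f)) + ((ts.map (cIndex svar f)) : List ℝ).sum := by
        rw [cIndex_node]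
        simp [hts]
      have hstrict : cIndex svar f (node ts) < (f 0 + f 2)^2 * Hp (leafCount (node ts)) := by
        rw [hcid, hm]
        linarith
      refine ⟨le_of_lt hstrict, ?_, ?_⟩
      · intro h
        exact absurd h (ne_of_lt hstrict)
      · intro hIso
        exfalso
        have hm3 : 3 ≤ (ts.map leafCount).sum := by
          have := length_le_sum_leaf ts
          omega
        rw [hm] at hIso
        obtain ⟨j, hj⟩ : ∃ j, (ts.map leafCount).sum = (j + 1) + 1 :=
          ⟨(ts.map leafCount).sum - 2, by omega⟩
        rw [hj, comb_pair (j+1) (by omega)] at hIso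
        cases hIso with
        | node h2 hperm =>
            have hl1 := h2.length_eq
            have hl2 := hperm.length_eq
            simp [hts] at hl1 hl2
            omega

end F

end MTree

/-- Theorem 18 for `D = var`: if `0 < f k < f (k-1) + f 2` for all `k ≥ 3`, then on
trees with `n ≥ 2` leaves the index `𝔠_{var,f}` is at most
`(f 0 + f 2)²/12 · (n-1)(n-2)(2n-3)`, with equality exactly at the comb `K_n`. -/
theorem cIndex_var_le_comb (f : ℕ → ℝ) (hf0 : ∀ n, 0 ≤ f n)
    (hf : ∀ k, 3 ≤ k → 0 < f k ∧ f k < f (k - 1) + f 2)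
    (n : ℕ) (hn : 2 ≤ n) (T : MTree) (hT : T.WellFormed) (hTn : T.leafCount = n) :
    MTree.cIndex MTree.svar f T ≤
      (f 0 + f 2) ^ 2 / 12 * ((n : ℝ) - 1) * ((n : ℝ) - 2) * (2 * (n : ℝ) - 3) ∧
    (MTree.cIndex MTree.svar f T =
        (f 0 + f 2) ^ 2 / 12 * ((n : ℝ) - 1) * ((n : ℝ) - 2) * (2 * (n : ℝ) - 3) ↔
      T.Iso (MTree.comb n)) := by
  have H := MTree.main_all f hf0 hf T hT
  rw [hTn] at H
  have he : (f 0 + f 2)^2 * MTree.Hp n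
      = (f 0 + f 2) ^ 2 / 12 * ((n : ℝ) - 1) * ((n : ℝ) - 2) * (2 * (n : ℝ) - 3) := by
    simp only [MTree.Hp]; ring
  rw [he] at H
  exact H
end

section
/- Let n ≥ 1 and let x₁ ≤ x₂ ≤ ⋯ ≤ x_{2n+1} be real numbers. Then (1/(2n+1)) Σ_{i=1}^{2n+1} |xᵢ − x_{n+1}| ≤ (1/(2n)) Σ_{i≠n+1} |xᵢ − (x_n + x_{n+2})/2|, i.e., removing the median entry from an odd-length sorted list does not decrease its mean deviation from the median; moreover the inequality is strict unless x₁ = x₂ = ⋯ = x_{2n+1}. -/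
/-- Removing the median entry from a sorted odd-length list `x₁ ≤ ⋯ ≤ x_{2n+1}` does
not decrease the mean deviation from the median; the inequality is strict unless all
entries are equal. -/
theorem mdm_remove_median_odd (n : ℕ) (hn : 1 ≤ n) (x : ℕ → ℝ)
    (hmono : ∀ i j, 1 ≤ i → i ≤ j → j ≤ 2 * n + 1 → x i ≤ x j) :
    (1 / (2 * n + 1 : ℝ)) * ∑ i ∈ Finset.Icc 1 (2 * n + 1), |x i - x (n + 1)| ≤
      (1 / (2 * n : ℝ)) *
        ∑ i ∈ (Finset.Icc 1 (2 * n + 1)).erase (n + 1),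
          |x i - (x n + x (n + 2)) / 2| ∧
    (¬ (∀ i ∈ Finset.Icc 1 (2 * n + 1), ∀ j ∈ Finset.Icc 1 (2 * n + 1), x i = x j) →
      (1 / (2 * n + 1 : ℝ)) * ∑ i ∈ Finset.Icc 1 (2 * n + 1), |x i - x (n + 1)| <
        (1 / (2 * n : ℝ)) *
          ∑ i ∈ (Finset.Icc 1 (2 * n + 1)).erase (n + 1),
            |x i - (x n + x (n + 2)) / 2|) := by
  set L := Finset.Ioc 0 n with hL
  set U := Finset.Ioc (n + 1) (2 * n + 1) with hU
  have hA : Finset.Icc 1 (2 * n + 1) = Finset.Ioc 0 (2 * n + 1) := by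
    ext i; simp; omega
  have hsplit : ∀ f : ℕ → ℝ, ∑ i ∈ Finset.Ioc 0 (2 * n + 1), f i
      = (∑ i ∈ L, f i) + f (n + 1) + ∑ i ∈ U, f i := by
    intro f
    rw [← Finset.sum_Ioc_consecutive f (by omega : 0 ≤ n) (by omega : n ≤ 2 * n + 1),
      ← Finset.sum_Ioc_consecutive f (by omega : n ≤ n + 1) (by omega : n + 1 ≤ 2 * n + 1),
      Nat.Ioc_succ_singleton, Finset.sum_singleton, add_assoc]
  have cardL : L.card = n := by rw [hL, Nat.card_Ioc]; omega
  have cardU : U.card = n := by rw [hU, Nat.card_Ioc]; omega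
  have hmemA : n + 1 ∈ Finset.Ioc 0 (2 * n + 1) := by simp; omega
  have hlo : ∀ i ∈ L, 1 ≤ i ∧ i ≤ n := by
    intro i hi; rw [hL, Finset.mem_Ioc] at hi; omega
  have hhi : ∀ i ∈ U, n + 2 ≤ i ∧ i ≤ 2 * n + 1 := by
    intro i hi; rw [hU, Finset.mem_Ioc] at hi; omega
  have hxlo : ∀ i ∈ L, x i ≤ x n :=
    fun i hi => hmono i n (hlo i hi).1 (hlo i hi).2 (by omega)
  have hxhi : ∀ i ∈ U, x (n + 2) ≤ x i :=
    fun i hi => hmono (n + 2) i (by omega) (hhi i hi).1 (hhi i hi).2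
  have hn1 : x n ≤ x (n + 1) := hmono n (n + 1) hn (by omega) (by omega)
  have hn2 : x (n + 1) ≤ x (n + 2) := hmono (n + 1) (n + 2) (by omega) (by omega) (by omega)
  set D : ℝ := (∑ i ∈ U, x i) - ∑ i ∈ L, x i with hD
  have sumc : ∀ c : ℝ, x n ≤ c → c ≤ x (n + 2) →
      (∑ i ∈ L, |x i - c|) + ∑ i ∈ U, |x i - c| = D := by
    intro c hc1 hc2
    have e1 : ∑ i ∈ L, |x i - c| = ∑ i ∈ L, (c - x i) :=
      Finset.sum_congr rfl (fun i hi => by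
        rw [abs_of_nonpos (by linarith [hxlo i hi])]; ring)
    have e2 : ∑ i ∈ U, |x i - c| = ∑ i ∈ U, (x i - c) :=
      Finset.sum_congr rfl (fun i hi => abs_of_nonneg (by linarith [hxhi i hi]))
    rw [e1, e2, Finset.sum_sub_distrib, Finset.sum_sub_distrib, Finset.sum_const,
      Finset.sum_const, cardL, cardU, nsmul_eq_mul, hD]
    ring
  have hS : ∑ i ∈ Finset.Icc 1 (2 * n + 1), |x i - x (n + 1)| = D := by
    rw [hA, hsplit]
    have h0 : |x (n + 1) - x (n + 1)| = 0 := by simp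
    rw [h0, add_zero, sumc (x (n + 1)) hn1 hn2]
  have hT : ∑ i ∈ (Finset.Icc 1 (2 * n + 1)).erase (n + 1),
      |x i - (x n + x (n + 2)) / 2| = D := by
    rw [hA, Finset.sum_erase_eq_sub hmemA, hsplit]
    rw [show (∑ i ∈ L, |x i - (x n + x (n + 2)) / 2|) + |x (n + 1) - (x n + x (n + 2)) / 2|
        + (∑ i ∈ U, |x i - (x n + x (n + 2)) / 2|)
        - |x (n + 1) - (x n + x (n + 2)) / 2|
        = (∑ i ∈ L, |x i - (x n + x (n + 2)) / 2|)
          + ∑ i ∈ U, |x i - (x n + x (n + 2)) / 2| by ring]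
    exact sumc _ (by linarith) (by linarith)
  have hUmap : U = L.map (addRightEmbedding (n + 1)) := by
    rw [hU, hL, Finset.map_add_right_Ioc]
    congr 1 <;> omega
  have hDalt : D = ∑ i ∈ L, (x (i + (n + 1)) - x i) := by
    rw [hD, hUmap, Finset.sum_map, Finset.sum_sub_distrib]
    rfl
  have hterm : ∀ i ∈ L, 0 ≤ x (i + (n + 1)) - x i := by
    intro i hi
    obtain ⟨h1, h2⟩ := hlo i hi
    have := hmono i (i + (n + 1)) h1 (by omega) (by omega)
    linarith
  have hD0 : 0 ≤ D := hDalt ▸ Finset.sum_nonneg hterm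
  have h2n : (0 : ℝ) < 2 * n := by positivity
  have hfr : (1 : ℝ) / (2 * n + 1) < 1 / (2 * n) :=
    one_div_lt_one_div_of_lt h2n (by linarith)
  constructor
  · rw [hS, hT]
    exact mul_le_mul_of_nonneg_right (le_of_lt hfr) hD0
  · intro hne
    rw [hS, hT]
    refine mul_lt_mul_of_pos_right hfr ?_
    push_neg at hne
    obtain ⟨i, hi, j, hj, hij⟩ := hne
    rw [Finset.mem_Icc] at hi hj
    have hx1 : x 1 < x (2 * n + 1) := by
      by_contra hcon
      push_neg at hcon
      have h1i := hmono 1 i (le_refl 1) hi.1 hi.2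
      have hi1 := hmono i (2 * n + 1) hi.1 hi.2 (le_refl _)
      have h1j := hmono 1 j (le_refl 1) hj.1 hj.2
      have hj1 := hmono j (2 * n + 1) hj.1 hj.2 (le_refl _)
      exact hij (by linarith)
    rw [hDalt]
    rcases lt_or_ge (x 1) (x (n + 1)) with hc | hc
    · refine Finset.sum_pos' hterm ⟨1, by rw [hL, Finset.mem_Ioc]; omega, ?_⟩
      have e : 1 + (n + 1) = n + 2 := by omega
      rw [e]
      linarith
    · refine Finset.sum_pos' hterm ⟨n, by rw [hL, Finset.mem_Ioc]; omega, ?_⟩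
      have e : n + (n + 1) = 2 * n + 1 := by omega
      rw [e]
      linarith
end

section
/- Let n ≥ 2 and let x₁ ≤ x₂ ≤ ⋯ ≤ x_{2n} be real numbers. Then (1/(2n)) Σ_{i=1}^{2n} |xᵢ − (x_n + x_{n+1})/2| ≤ (1/(2n−2)) Σ_{i∉{n,n+1}} |xᵢ − (x_{n−1} + x_{n+2})/2|, i.e., removing the two middle entries from an even-length sorted list does not decrease its mean deviation from the median; moreover the inequality is strict unless x₁ = ⋯ = x_n and x_{n+1} = ⋯ = x_{2n}. -/
/-- Removing the two middle entries from a sorted even-length list `x₁ ≤ ⋯ ≤ x_{2n}`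
does not decrease the mean deviation from the median; the inequality is strict unless
`x₁ = ⋯ = x_n` and `x_{n+1} = ⋯ = x_{2n}`. -/
theorem mdm_remove_middle_even (n : ℕ) (hn : 2 ≤ n) (x : ℕ → ℝ)
    (hmono : ∀ i j, 1 ≤ i → i ≤ j → j ≤ 2 * n → x i ≤ x j) :
    (1 / (2 * n : ℝ)) *
        ∑ i ∈ Finset.Icc 1 (2 * n), |x i - (x n + x (n + 1)) / 2| ≤
      (1 / (2 * n - 2 : ℝ)) *
        ∑ i ∈ ((Finset.Icc 1 (2 * n)).erase n).erase (n + 1),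
          |x i - (x (n - 1) + x (n + 2)) / 2| ∧
    (¬ ((∀ i ∈ Finset.Icc 1 n, x i = x 1) ∧
          (∀ i ∈ Finset.Icc (n + 1) (2 * n), x i = x (2 * n))) →
      (1 / (2 * n : ℝ)) *
          ∑ i ∈ Finset.Icc 1 (2 * n), |x i - (x n + x (n + 1)) / 2| <
        (1 / (2 * n - 2 : ℝ)) *
          ∑ i ∈ ((Finset.Icc 1 (2 * n)).erase n).erase (n + 1),
            |x i - (x (n - 1) + x (n + 2)) / 2|) := by
  obtain ⟨m, rfl⟩ : ∃ m, n = m + 2 := ⟨n - 2, by omega⟩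
  have hx : ∀ i j, 1 ≤ i → i ≤ j → j ≤ 2 * m + 4 → x i ≤ x j := fun i j h1 h2 h3 =>
    hmono i j h1 h2 (by omega)
  simp only [show m + 2 + 1 = m + 3 from by omega, show m + 2 + 2 = m + 4 from by omega,
    show m + 2 - 1 = m + 1 from by omega, show 2 * (m + 2) = 2 * m + 4 from by omega]
  -- basic monotонicity facts
  have h12 : x (m + 2) ≤ x (m + 3) := hx _ _ (by omega) (by omega) (by omega)
  have h01 : x (m + 1) ≤ x (m + 2) := hx _ _ (by omega) (by omega) (by omega)
  have h34 : x (m + 3) ≤ x (m + 4) := hx _ _ (by omega) (by omega) (by omega)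
  have h14 : x (m + 1) ≤ x (m + 4) := hx _ _ (by omega) (by omega) (by omega)
  -- set splits
  have hsplit : Finset.Icc 1 (2 * m + 4) =
      Finset.Icc 1 (m + 2) ∪ Finset.Icc (m + 3) (2 * m + 4) := by
    ext i; simp only [Finset.mem_Icc, Finset.mem_union]; omega
  have hdisj : Disjoint (Finset.Icc 1 (m + 2)) (Finset.Icc (m + 3) (2 * m + 4)) := by
    rw [Finset.disjoint_left]
    intro a ha hb
    rw [Finset.mem_Icc] at ha hb; omega
  have hset : ((Finset.Icc 1 (2 * m + 4)).erase (m + 2)).erase (m + 3) =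
      Finset.Icc 1 (m + 1) ∪ Finset.Icc (m + 4) (2 * m + 4) := by
    ext i
    simp only [Finset.mem_erase, Finset.mem_Icc, Finset.mem_union]
    omega
  have hdisj' : Disjoint (Finset.Icc 1 (m + 1)) (Finset.Icc (m + 4) (2 * m + 4)) := by
    rw [Finset.disjoint_left]
    intro a ha hb
    rw [Finset.mem_Icc] at ha hb; omega
  -- abbreviations
  set A : ℝ := ∑ i ∈ Finset.Icc 1 (m + 2), x i with hA
  set B : ℝ := ∑ i ∈ Finset.Icc (m + 3) (2 * m + 4), x i with hB
  set A' : ℝ := ∑ i ∈ Finset.Icc 1 (m + 1), x i with hA'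
  set B' : ℝ := ∑ i ∈ Finset.Icc (m + 4) (2 * m + 4), x i with hB'
  -- cardinalities
  have c1 : (Finset.Icc 1 (m + 2)).card = m + 2 := by rw [Nat.card_Icc]; omega
  have c2 : (Finset.Icc (m + 3) (2 * m + 4)).card = m + 2 := by rw [Nat.card_Icc]; omega
  have c3 : (Finset.Icc 1 (m + 1)).card = m + 1 := by rw [Nat.card_Icc]; omega
  have c4 : (Finset.Icc (m + 4) (2 * m + 4)).card = m + 1 := by rw [Nat.card_Icc]; omega
  -- the full sum
  have hS : ∑ i ∈ Finset.Icc 1 (2 * m + 4), |x i - (x (m + 2) + x (m + 3)) / 2| = B - A := by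
    rw [hsplit, Finset.sum_union hdisj]
    have e1 : ∑ i ∈ Finset.Icc 1 (m + 2), |x i - (x (m + 2) + x (m + 3)) / 2| =
        ∑ i ∈ Finset.Icc 1 (m + 2), ((x (m + 2) + x (m + 3)) / 2 - x i) := by
      refine Finset.sum_congr rfl fun i hi => ?_
      rw [Finset.mem_Icc] at hi
      have := hx i (m + 2) hi.1 hi.2 (by omega)
      rw [abs_sub_comm, abs_of_nonneg (by linarith)]
    have e2 : ∑ i ∈ Finset.Icc (m + 3) (2 * m + 4), |x i - (x (m + 2) + x (m + 3)) / 2| =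
        ∑ i ∈ Finset.Icc (m + 3) (2 * m + 4), (x i - (x (m + 2) + x (m + 3)) / 2) := by
      refine Finset.sum_congr rfl fun i hi => ?_
      rw [Finset.mem_Icc] at hi
      have := hx (m + 3) i (by omega) hi.1 hi.2
      rw [abs_of_nonneg (by linarith)]
    rw [e1, e2, Finset.sum_sub_distrib, Finset.sum_sub_distrib, Finset.sum_const,
      Finset.sum_const, c1, c2, nsmul_eq_mul]
    push_cast
    ring
  -- the reduced sum
  have hS' : ∑ i ∈ ((Finset.Icc 1 (2 * m + 4)).erase (m + 2)).erase (m + 3),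
      |x i - (x (m + 1) + x (m + 4)) / 2| = B' - A' := by
    rw [hset, Finset.sum_union hdisj']
    have e1 : ∑ i ∈ Finset.Icc 1 (m + 1), |x i - (x (m + 1) + x (m + 4)) / 2| =
        ∑ i ∈ Finset.Icc 1 (m + 1), ((x (m + 1) + x (m + 4)) / 2 - x i) := by
      refine Finset.sum_congr rfl fun i hi => ?_
      rw [Finset.mem_Icc] at hi
      have := hx i (m + 1) hi.1 hi.2 (by omega)
      rw [abs_sub_comm, abs_of_nonneg (by linarith)]
    have e2 : ∑ i ∈ Finset.Icc (m + 4) (2 * m + 4), |x i - (x (m + 1) + x (m + 4)) / 2| =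
        ∑ i ∈ Finset.Icc (m + 4) (2 * m + 4), (x i - (x (m + 1) + x (m + 4)) / 2) := by
      refine Finset.sum_congr rfl fun i hi => ?_
      rw [Finset.mem_Icc] at hi
      have := hx (m + 4) i (by omega) hi.1 hi.2
      rw [abs_of_nonneg (by linarith)]
    rw [e1, e2, Finset.sum_sub_distrib, Finset.sum_sub_distrib, Finset.sum_const,
      Finset.sum_const, c3, c4, nsmul_eq_mul]
    push_cast
    ring
  -- relation between A, B and A', B'
  have hAA : A = A' + x (m + 2) := by
    rw [hA, hA', show m + 2 = m + 1 + 1 from rfl, Finset.sum_Icc_succ_top (by omega)]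
  have hBB : B = x (m + 3) + B' := by
    rw [hB, hB']
    rw [show Finset.Icc (m + 3) (2 * m + 4) = insert (m + 3) (Finset.Icc (m + 4) (2 * m + 4))
      from by ext i; simp only [Finset.mem_Icc, Finset.mem_insert]; omega]
    rw [Finset.sum_insert (by rw [Finset.mem_Icc]; omega)]
  -- key bounds
  have keyB : ((m : ℝ) + 1) * x (m + 3) ≤ B' := by
    have h := Finset.card_nsmul_le_sum (Finset.Icc (m + 4) (2 * m + 4)) x (x (m + 3))
      (fun i hi => by
        rw [Finset.mem_Icc] at hi
        exact hx (m + 3) i (by omega) (by omega) hi.2)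
    rw [c4, nsmul_eq_mul] at h
    push_cast at h
    linarith
  have keyA : A' ≤ ((m : ℝ) + 1) * x (m + 2) := by
    have h := Finset.sum_le_card_nsmul (Finset.Icc 1 (m + 1)) x (x (m + 2))
      (fun i hi => by
        rw [Finset.mem_Icc] at hi
        exact hx i (m + 2) hi.1 (by omega) (by omega))
    rw [c3, nsmul_eq_mul] at h
    push_cast at h
    linarith
  have hm0 : (0 : ℝ) ≤ (m : ℝ) := Nat.cast_nonneg m
  have hpos1 : (0 : ℝ) < 2 * ((m : ℝ) + 2) := by linarith
  have hpos2 : (0 : ℝ) < 2 * ((m : ℝ) + 2) - 2 := by linarith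
  rw [hS, hS']
  push_cast
  constructor
  · rw [div_mul_eq_mul_div, div_mul_eq_mul_div, div_le_div_iff₀ hpos1 hpos2]
    nlinarith [keyB, keyA, hAA, hBB]
  · intro hne
    -- strict key bound
    have keystrict : ((m : ℝ) + 1) * (x (m + 3) - x (m + 2)) < B' - A' := by
      rw [not_and_or] at hne
      rcases hne with hne | hne
      · push_neg at hne
        obtain ⟨i, hi, hine⟩ := hne
        rw [Finset.mem_Icc] at hi
        have h1i : x 1 ≤ x i := hx 1 i le_rfl hi.1 (by omega)
        have hi2 : x i ≤ x (m + 2) := hx i (m + 2) hi.1 hi.2 (by omega)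
        have hstrict : x 1 < x (m + 2) := lt_of_lt_of_le (lt_of_le_of_ne h1i (Ne.symm hine)) hi2
        have hA'strict : A' < ((m : ℝ) + 1) * x (m + 2) := by
          have h := Finset.sum_lt_sum (s := Finset.Icc 1 (m + 1))
            (f := x) (g := fun _ => x (m + 2))
            (fun j hj => by
              rw [Finset.mem_Icc] at hj
              exact hx j (m + 2) hj.1 (by omega) (by omega))
            ⟨1, by rw [Finset.mem_Icc]; omega, hstrict⟩
          rw [Finset.sum_const, c3, nsmul_eq_mul] at h
          push_cast at h
          linarith
        nlinarith [keyB]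
      · push_neg at hne
        obtain ⟨i, hi, hine⟩ := hne
        rw [Finset.mem_Icc] at hi
        have h1i : x i ≤ x (2 * m + 4) := hx i (2 * m + 4) (by omega) hi.2 (by omega)
        have hi2 : x (m + 3) ≤ x i := hx (m + 3) i (by omega) hi.1 (by omega)
        have hstrict : x (m + 3) < x (2 * m + 4) :=
          lt_of_le_of_lt hi2 (lt_of_le_of_ne h1i hine)
        have hB'strict : ((m : ℝ) + 1) * x (m + 3) < B' := by
          have h := Finset.sum_lt_sum (s := Finset.Icc (m + 4) (2 * m + 4))
            (f := fun _ => x (m + 3)) (g := x)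
            (fun j hj => by
              rw [Finset.mem_Icc] at hj
              exact hx (m + 3) j (by omega) (by omega) hj.2)
            ⟨2 * m + 4, by rw [Finset.mem_Icc]; omega, hstrict⟩
          rw [Finset.sum_const, c4, nsmul_eq_mul] at h
          push_cast at h
          linarith
        nlinarith [keyA]
    rw [div_mul_eq_mul_div, div_mul_eq_mul_div, div_lt_div_iff₀ hpos1 hpos2]
    nlinarith [hAA, hBB]
end

section
/- Let n ≥ 3 and let x₁,…,x_n be real numbers with mean x̄ = (1/n) Σᵢ xᵢ. Suppose (x_n − x̄)² ≤ (xᵢ − x̄)² for every i = 1,…,n−1 (i.e., x_n is a value closest to the mean). Then var(x₁,…,x_n) ≤ var(x₁,…,x_{n−1}), and hence sd(x₁,…,x_n) ≤ sd(x₁,…,x_{n−1}); moreover the inequality is strict unless either x₁ = ⋯ = x_n, or n is even and the multiset {x₁,…,x_n} consists of n/2 copies of each of two distinct values. -/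
set_option maxHeartbeats 1000000


/-- If `x_n` is an entry closest to the mean of `x₁,…,x_n` (`n ≥ 3`), then removing it
does not decrease the sample variance (hence neither the sample standard deviation);
the inequalities are strict unless all entries are equal, or `n` is even and the
entries take exactly two distinct values, each with multiplicity `n/2`. -/
theorem var_remove_closest_to_mean (n : ℕ) (hn : 3 ≤ n) (x : ℕ → ℝ)
    (hclose : ∀ i ∈ Finset.Icc 1 (n - 1),
      (x n - (∑ j ∈ Finset.Icc 1 n, x j) / n) ^ 2 ≤
        (x i - (∑ j ∈ Finset.Icc 1 n, x j) / n) ^ 2) :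
    (∑ i ∈ Finset.Icc 1 n, (x i - (∑ j ∈ Finset.Icc 1 n, x j) / n) ^ 2) / ((n : ℝ) - 1) ≤
      (∑ i ∈ Finset.Icc 1 (n - 1),
          (x i - (∑ j ∈ Finset.Icc 1 (n - 1), x j) / ((n : ℝ) - 1)) ^ 2) / ((n : ℝ) - 2) ∧
    Real.sqrt
        ((∑ i ∈ Finset.Icc 1 n, (x i - (∑ j ∈ Finset.Icc 1 n, x j) / n) ^ 2) /
          ((n : ℝ) - 1)) ≤
      Real.sqrt
        ((∑ i ∈ Finset.Icc 1 (n - 1),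
            (x i - (∑ j ∈ Finset.Icc 1 (n - 1), x j) / ((n : ℝ) - 1)) ^ 2) /
          ((n : ℝ) - 2)) ∧
    (¬ ((∀ i ∈ Finset.Icc 1 n, x i = x 1) ∨
          (Even n ∧ ∃ a b : ℝ, a ≠ b ∧
            ((Finset.Icc 1 n).filter (fun i => x i = a)).card = n / 2 ∧
            ((Finset.Icc 1 n).filter (fun i => x i = b)).card = n / 2)) →
      (∑ i ∈ Finset.Icc 1 n, (x i - (∑ j ∈ Finset.Icc 1 n, x j) / n) ^ 2) / ((n : ℝ) - 1) <
        (∑ i ∈ Finset.Icc 1 (n - 1),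
            (x i - (∑ j ∈ Finset.Icc 1 (n - 1), x j) / ((n : ℝ) - 1)) ^ 2) /
          ((n : ℝ) - 2) ∧
      Real.sqrt
          ((∑ i ∈ Finset.Icc 1 n, (x i - (∑ j ∈ Finset.Icc 1 n, x j) / n) ^ 2) /
            ((n : ℝ) - 1)) <
        Real.sqrt
          ((∑ i ∈ Finset.Icc 1 (n - 1),
              (x i - (∑ j ∈ Finset.Icc 1 (n - 1), x j) / ((n : ℝ) - 1)) ^ 2) /
            ((n : ℝ) - 2))) := by
  have hn1 : (1:ℕ) ≤ n := by omega
  set s := Finset.Icc 1 n with hs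
  set s' := Finset.Icc 1 (n-1) with hs'
  have hins : s = insert n s' := by
    ext i; simp only [hs, hs', Finset.mem_Icc, Finset.mem_insert]; omega
  have hnot : n ∉ s' := by simp only [hs', Finset.mem_Icc]; omega
  set S := ∑ j ∈ s, x j with hS
  set m : ℝ := S / n with hm
  set V := ∑ i ∈ s, (x i - m)^2 with hV
  set T := ∑ j ∈ s', x j with hT
  set m' : ℝ := T / ((n:ℝ)-1) with hm'
  set W := ∑ i ∈ s', (x i - m')^2 with hW
  have hnR : (3:ℝ) ≤ (n:ℝ) := by exact_mod_cast hn
  have h1 : (0:ℝ) < (n:ℝ) - 1 := by linarith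
  have h2 : (0:ℝ) < (n:ℝ) - 2 := by linarith
  have hn0 : (n:ℝ) ≠ 0 := by positivity
  have hST : S = x n + T := by rw [hS, hT, hins, Finset.sum_insert hnot]
  have hcard : (s.card : ℝ) = (n:ℝ) := by simp [hs]
  have hcard' : (s'.card : ℝ) = (n:ℝ) - 1 := by
    have h : s'.card = n - 1 := by simp [hs']
    rw [h]; push_cast [hn1]; ring
  have hsum0 : ∑ i ∈ s, (x i - m) = 0 := by
    rw [Finset.sum_sub_distrib, Finset.sum_const, nsmul_eq_mul, hcard, ← hS, hm]
    field_simp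
    ring
  have hsum0' : ∑ i ∈ s', (x i - m) = -(x n - m) := by
    have h := hsum0
    rw [hins, Finset.sum_insert hnot] at h
    linarith
  have hVexp : V = (x n - m)^2 + ∑ i ∈ s', (x i - m)^2 := by
    rw [hV, hins, Finset.sum_insert hnot]
  have hWV : ((n:ℝ)-1) * W = ((n:ℝ)-1) * V - (n:ℝ) * (x n - m)^2 := by
    have hc : ∀ i, x i - m' = (x i - m) + (x n - m)/((n:ℝ)-1) := by
      intro i
      have hTs : T = S - x n := by rw [hST]; ring
      rw [hm', hTs, hm]
      field_simp
      ring
    have hexp : W = (∑ i ∈ s', (x i - m)^2)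
        + (2*((x n - m)/((n:ℝ)-1))) * (∑ i ∈ s', (x i - m))
        + (s'.card:ℝ) * ((x n - m)/((n:ℝ)-1))^2 := by
      rw [hW]
      calc ∑ i ∈ s', (x i - m')^2
          = ∑ i ∈ s', ((x i - m)^2 + (2*((x n - m)/((n:ℝ)-1)))*(x i - m)
              + ((x n - m)/((n:ℝ)-1))^2) := by
            refine Finset.sum_congr rfl fun i _ => ?_
            rw [hc i]; ring
        _ = _ := by
            rw [Finset.sum_add_distrib, Finset.sum_add_distrib, ← Finset.mul_sum,
              Finset.sum_const, nsmul_eq_mul]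
    rw [hexp, hsum0', hcard']
    have hsq : ∑ i ∈ s', (x i - m)^2 = V - (x n - m)^2 := by rw [hVexp]; ring
    rw [hsq]
    field_simp
    ring
  have hkey : (n:ℝ) * (x n - m)^2 ≤ V := by
    have h := Finset.card_nsmul_le_sum s' (fun i => (x i - m)^2) ((x n - m)^2)
      (fun i hi => hclose i hi)
    rw [nsmul_eq_mul, hcard'] at h
    rw [hVexp]
    nlinarith [h]
  have hmain : V/((n:ℝ)-1) ≤ W/((n:ℝ)-2) := by
    rw [div_le_div_iff₀ h1 h2]
    nlinarith [hkey, hWV]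
  have hV0 : 0 ≤ V := Finset.sum_nonneg fun i _ => sq_nonneg _
  refine ⟨hmain, Real.sqrt_le_sqrt hmain, ?_⟩
  intro hne
  -- derive a strict inequality element
  have hex : ∃ i ∈ s', (x n - m)^2 < (x i - m)^2 := by
    by_contra hcon
    push_neg at hcon
    have hall : ∀ i ∈ s, (x i - m)^2 = (x n - m)^2 := by
      intro i hi
      rw [hins, Finset.mem_insert] at hi
      rcases hi with rfl | hi
      · rfl
      · exact le_antisymm (hcon i hi) (hclose i hi)
    by_cases hdn : x n - m = 0
    · -- all entries equal
      refine hne (Or.inl fun i hi => ?_)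
      have h1m : x 1 = m := by
        have h := hall 1 (by simp [hs, Finset.mem_Icc]; omega)
        rw [hdn] at h
        nlinarith [h]
      have him : x i = m := by
        have h := hall i hi
        rw [hdn] at h
        nlinarith [h]
      rw [him, h1m]
    · -- two values case
      set d := x n - m with hd
      have hab : ∀ i ∈ s, x i = m + d ∨ x i = m - d := by
        intro i hi
        have h := hall i hi
        have hz : (x i - (m + d)) * (x i - (m - d)) = 0 := by nlinarith [h]
        rcases mul_eq_zero.mp hz with h' | h'
        · left; linarith
        · right; linarith
      have habne : m + d ≠ m - d := by
        intro h; apply hdn; linarith [h]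
      classical
      set A := s.filter (fun i => x i = m + d) with hA
      set B := s.filter (fun i => x i = m - d) with hB
      have hdisj : Disjoint A B := by
        rw [Finset.disjoint_filter]
        intro i _ hia hib
        exact habne (hia ▸ hib ▸ rfl)
      have hunion : A ∪ B = s := by
        rw [hA, hB, ← Finset.filter_or]
        exact Finset.filter_true_of_mem hab
      have hcardAB : A.card + B.card = n := by
        have := Finset.card_union_of_disjoint hdisj
        rw [hunion] at this
        have hcn : s.card = n := by simp [hs]
        omega
      have hsumA : ∑ i ∈ A, (x i - m) = (A.card : ℝ) * d := by
        rw [Finset.sum_congr rfl (fun i hi => ?_), Finset.sum_const, nsmul_eq_mul]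
        have := (Finset.mem_filter.mp hi).2
        rw [this]; ring
      have hsumB : ∑ i ∈ B, (x i - m) = (B.card : ℝ) * (-d) := by
        rw [Finset.sum_congr rfl (fun i hi => ?_), Finset.sum_const, nsmul_eq_mul]
        have := (Finset.mem_filter.mp hi).2
        rw [this]; ring
      have hsumsplit : (A.card : ℝ) * d + (B.card : ℝ) * (-d) = 0 := by
        rw [← hsumA, ← hsumB, ← Finset.sum_union hdisj, hunion, hsum0]
      have hcardeq : A.card = B.card := by
        have : ((A.card : ℝ) - (B.card : ℝ)) * d = 0 := by linarith
        rcases mul_eq_zero.mp this with h' | h'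
        · exact_mod_cast (by linarith : (A.card : ℝ) = B.card)
        · exact absurd h' hdn
      have heven : Even n := by
        refine ⟨A.card, ?_⟩
        omega
      refine hne (Or.inr ⟨heven, m + d, m - d, habne, ?_, ?_⟩)
      · show A.card = n / 2
        omega
      · show B.card = n / 2
        omega
  -- strict inequality
  obtain ⟨i0, hi0, hlt⟩ := hex
  have hkeylt : (n:ℝ) * (x n - m)^2 < V := by
    have hsl : (∑ _i ∈ s', (x n - m)^2) < ∑ i ∈ s', (x i - m)^2 :=
      Finset.sum_lt_sum (fun i hi => hclose i hi) ⟨i0, hi0, hlt⟩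
    rw [Finset.sum_const, nsmul_eq_mul, hcard'] at hsl
    rw [hVexp]
    nlinarith [hsl]
  have hmainlt : V/((n:ℝ)-1) < W/((n:ℝ)-2) := by
    rw [div_lt_div_iff₀ h1 h2]
    nlinarith [hkeylt, hWV]
  exact ⟨hmainlt, Real.sqrt_lt_sqrt (by positivity) hmainlt⟩
end

section
/- Let k ≥ 2 and n₁,…,n_k ≥ 1 be integers, let n = n₁ + ⋯ + n_k, and suppose k ≤ n − 1. Then e^{n₁} + ⋯ + e^{n_k} + e^k ≤ e^{n−k+1} + e^k + (k−1)e < eⁿ; moreover the first inequality is strict unless at most one of the exponents nᵢ is ≥ 2. -/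
lemma my_len_le_sum (t : List ℕ) (h : ∀ i ∈ t, 1 ≤ i) : t.length ≤ t.sum := by
  induction t with
  | nil => simp
  | cons a t ih =>
    simp only [List.length_cons, List.sum_cons]
    have h1 := h a List.mem_cons_self
    have h2 := ih (fun i hi => h i (List.mem_cons_of_mem a hi))
    omega

lemma my_len_lt_sum (t : List ℕ) (h : ∀ i ∈ t, 1 ≤ i)
    (hc : 1 ≤ t.countP (fun i => decide (2 ≤ i))) : t.length + 1 ≤ t.sum := by
  induction t with
  | nil => simp at hc
  | cons a t ih =>
    simp only [List.length_cons, List.sum_cons, List.countP_cons] at *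
    have h1 := h a List.mem_cons_self
    have h2 := my_len_le_sum t (fun i hi => h i (List.mem_cons_of_mem a hi))
    by_cases ha : 2 ≤ a
    · omega
    · have hd : (decide (2 ≤ a)) = false := by simp [ha]
      rw [hd] at hc
      simp only [Bool.false_eq_true, if_false, Nat.add_zero] at hc
      have := ih (fun i hi => h i (List.mem_cons_of_mem a hi)) hc
      omega

lemma one_le_exp' {x : ℝ} (hx : 0 ≤ x) : 1 ≤ Real.exp x := by
  have := Real.exp_le_exp.mpr hx
  rwa [Real.exp_zero] at this

lemma one_lt_exp' {x : ℝ} (hx : 0 < x) : 1 < Real.exp x := by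
  have := Real.exp_lt_exp.mpr hx
  rwa [Real.exp_zero] at this

lemma pair_le (a b : ℝ) (ha : 1 ≤ a) (hb : 1 ≤ b) :
    Real.exp a + Real.exp b ≤ Real.exp (a + b - 1) + Real.exp 1 := by
  have hx : (1:ℝ) ≤ Real.exp (a - 1) := one_le_exp' (by linarith)
  have hy : (1:ℝ) ≤ Real.exp (b - 1) := one_le_exp' (by linarith)
  have ea : Real.exp a = Real.exp 1 * Real.exp (a - 1) := by
    rw [← Real.exp_add]; ring_nf
  have eb : Real.exp b = Real.exp 1 * Real.exp (b - 1) := by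
    rw [← Real.exp_add]; ring_nf
  have eab : Real.exp (a + b - 1) = Real.exp 1 * (Real.exp (a-1) * Real.exp (b-1)) := by
    rw [← Real.exp_add, ← Real.exp_add]; ring_nf
  have he : (0:ℝ) < Real.exp 1 := Real.exp_pos 1
  nlinarith [mul_nonneg (sub_nonneg.mpr hx) (sub_nonneg.mpr hy)]

lemma pair_lt (a b : ℝ) (ha : 2 ≤ a) (hb : 2 ≤ b) :
    Real.exp a + Real.exp b < Real.exp (a + b - 1) + Real.exp 1 := by
  have hx : (1:ℝ) < Real.exp (a - 1) := one_lt_exp' (by linarith)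
  have hy : (1:ℝ) < Real.exp (b - 1) := one_lt_exp' (by linarith)
  have ea : Real.exp a = Real.exp 1 * Real.exp (a - 1) := by
    rw [← Real.exp_add]; ring_nf
  have eb : Real.exp b = Real.exp 1 * Real.exp (b - 1) := by
    rw [← Real.exp_add]; ring_nf
  have eab : Real.exp (a + b - 1) = Real.exp 1 * (Real.exp (a-1) * Real.exp (b-1)) := by
    rw [← Real.exp_add, ← Real.exp_add]; ring_nf
  have he : (0:ℝ) < Real.exp 1 := Real.exp_pos 1
  nlinarith [mul_pos (sub_pos.mpr hx) (sub_pos.mpr hy)]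

lemma aux_main (ns : List ℕ) (hne : ns ≠ []) (hpos : ∀ i ∈ ns, 1 ≤ i) :
    ((ns.map (fun i => Real.exp i)).sum ≤
      Real.exp ((ns.sum : ℝ) - ns.length + 1) + ((ns.length : ℝ) - 1) * Real.exp 1) ∧
    (2 ≤ ns.countP (fun i => decide (2 ≤ i)) →
      (ns.map (fun i => Real.exp i)).sum <
        Real.exp ((ns.sum : ℝ) - ns.length + 1) + ((ns.length : ℝ) - 1) * Real.exp 1) := by
  induction ns with
  | nil => exact absurd rfl hne
  | cons a t ih =>
    by_cases ht : t = []
    · subst ht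
      constructor
      · simp
      · intro hc
        have := List.countP_le_length (p := fun i => decide (2 ≤ i)) (l := [a])
        simp at this hc
        omega
    · obtain ⟨IH1, IH2⟩ := ih ht (fun i hi => hpos i (List.mem_cons_of_mem a hi))
      have ha1 : 1 ≤ a := hpos a List.mem_cons_self
      have hts : t.length ≤ t.sum := my_len_le_sum t (fun i hi => hpos i (List.mem_cons_of_mem a hi))
      have htl : 1 ≤ t.length := by
        cases t with | nil => exact absurd rfl ht | cons _ _ => simp
      have htsR : (t.length : ℝ) ≤ (t.sum : ℝ) := by exact_mod_cast hts
      have hb1 : (1:ℝ) ≤ (t.sum : ℝ) - t.length + 1 := by linarith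
      have ha1' : (1:ℝ) ≤ (a:ℝ) := by exact_mod_cast ha1
      have hexp_eq : ((a :: t).sum : ℝ) - ((a :: t).length : ℝ) + 1
          = (a:ℝ) + ((t.sum : ℝ) - t.length + 1) - 1 := by
        push_cast [List.sum_cons, List.length_cons]; ring
      have hlen : (((a :: t).length : ℕ) : ℝ) = (t.length : ℝ) + 1 := by
        push_cast [List.length_cons]; ring
      have hconsum : (((a :: t).map (fun i => Real.exp i)).sum : ℝ)
          = Real.exp (a : ℕ) + ((t.map (fun i => Real.exp i)).sum : ℝ) := by simp
      constructor
      · rw [hexp_eq, hlen, hconsum]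
        have p := pair_le (a:ℝ) ((t.sum : ℝ) - t.length + 1) ha1' hb1
        linarith
      · intro hc
        rw [hexp_eq, hlen, hconsum]
        rw [List.countP_cons] at hc
        by_cases hct : 2 ≤ t.countP (fun i => decide (2 ≤ i))
        · have p := pair_le (a:ℝ) ((t.sum : ℝ) - t.length + 1) ha1' hb1
          have := IH2 hct
          linarith
        · have ha2 : 2 ≤ a := by
            by_contra h2
            have hd : (decide (2 ≤ a)) = false := by simp [h2]
            rw [hd] at hc
            simp only [Bool.false_eq_true, if_false, Nat.add_zero] at hc
            omega
          have hct1 : 1 ≤ t.countP (fun i => decide (2 ≤ i)) := by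
            have hd : (decide (2 ≤ a)) = true := by simp [ha2]
            rw [hd, if_pos rfl] at hc
            omega
          have hts2 : t.length + 1 ≤ t.sum :=
            my_len_lt_sum t (fun i hi => hpos i (List.mem_cons_of_mem a hi)) hct1
          have hb2 : (2:ℝ) ≤ (t.sum : ℝ) - t.length + 1 := by
            have : (t.length : ℝ) + 1 ≤ (t.sum : ℝ) := by exact_mod_cast hts2
            linarith
          have ha2' : (2:ℝ) ≤ (a:ℝ) := by exact_mod_cast ha2
          have p := pair_lt (a:ℝ) ((t.sum : ℝ) - t.length + 1) ha2' hb2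
          linarith

lemma growth (m : ℕ) (hm : 1 ≤ m) : (m : ℝ) < (Real.exp 1 - 2) * Real.exp m := by
  induction m with
  | zero => omega
  | succ n ih =>
    have he : (2.7182818283 : ℝ) < Real.exp 1 := Real.exp_one_gt_d9
    by_cases hn : 1 ≤ n
    · have IH := ih hn
      have hrw : Real.exp ((n + 1 : ℕ) : ℝ) = Real.exp n * Real.exp 1 := by
        push_cast; rw [← Real.exp_add]
      rw [hrw]
      have hen : (1:ℝ) ≤ Real.exp n := one_le_exp' (by positivity)
      push_cast
      nlinarith
    · have : n = 0 := by omega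
      subst this
      norm_num
      nlinarith [Real.exp_pos 1]

/-- For positive integers `n₁,…,n_k` with `k ≥ 2` and `k ≤ n - 1` where `n = Σ nᵢ`:
`e^{n₁} + ⋯ + e^{n_k} + e^k ≤ e^{n-k+1} + e^k + (k-1)e < eⁿ`, and the first inequality
is strict unless at most one of the exponents `nᵢ` is `≥ 2`. -/
theorem sum_exp_le_and_lt (ns : List ℕ) (hk : 2 ≤ ns.length)
    (hpos : ∀ i ∈ ns, 1 ≤ i) (hkn : ns.length + 1 ≤ ns.sum) :
    (ns.map (fun i => Real.exp i)).sum + Real.exp ns.length ≤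
      Real.exp ((ns.sum : ℝ) - ns.length + 1) + Real.exp ns.length +
        ((ns.length : ℝ) - 1) * Real.exp 1 ∧
    Real.exp ((ns.sum : ℝ) - ns.length + 1) + Real.exp ns.length +
        ((ns.length : ℝ) - 1) * Real.exp 1 < Real.exp ns.sum ∧
    (2 ≤ ns.countP (fun i => decide (2 ≤ i)) →
      (ns.map (fun i => Real.exp i)).sum + Real.exp ns.length <
        Real.exp ((ns.sum : ℝ) - ns.length + 1) + Real.exp ns.length +
          ((ns.length : ℝ) - 1) * Real.exp 1) := by
  have hne : ns ≠ [] := by intro h; subst h; simp at hk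
  obtain ⟨H1, H2⟩ := aux_main ns hne hpos
  refine ⟨by linarith, ?_, fun hc => by linarith [H2 hc]⟩
  have hk2 : (2:ℝ) ≤ (ns.length : ℝ) := by exact_mod_cast hk
  have hkn' : (ns.length : ℝ) + 1 ≤ (ns.sum : ℝ) := by exact_mod_cast hkn
  have e1 : Real.exp ((ns.sum : ℝ) - ns.length + 1) ≤ Real.exp ((ns.sum : ℝ) - 1) :=
    Real.exp_le_exp.mpr (by linarith)
  have e2 : Real.exp (ns.length : ℝ) ≤ Real.exp ((ns.sum : ℝ) - 1) :=
    Real.exp_le_exp.mpr (by linarith)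
  have hep : (0:ℝ) < Real.exp 1 := Real.exp_pos 1
  have e3 : ((ns.length : ℝ) - 1) * Real.exp 1 ≤ ((ns.sum : ℝ) - 2) * Real.exp 1 := by
    nlinarith
  have hm : 1 ≤ ns.sum - 2 := by omega
  have hg := growth (ns.sum - 2) hm
  have hcast : ((ns.sum - 2 : ℕ) : ℝ) = (ns.sum : ℝ) - 2 := by
    have h2 : 2 ≤ ns.sum := by omega
    push_cast [Nat.cast_sub h2]
    ring
  rw [hcast] at hg
  have hsplit : Real.exp (ns.sum : ℝ) = Real.exp ((ns.sum : ℝ) - 1) * Real.exp 1 := by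
    rw [← Real.exp_add]; ring_nf
  have hsplit2 : Real.exp ((ns.sum : ℝ) - 1) = Real.exp ((ns.sum : ℝ) - 2) * Real.exp 1 := by
    rw [← Real.exp_add]; ring_nf
  have final : 2 * Real.exp ((ns.sum : ℝ) - 1) + ((ns.sum : ℝ) - 2) * Real.exp 1
      < Real.exp (ns.sum : ℝ) := by
    have h1 : ((ns.sum : ℝ) - 2) * Real.exp 1
        < (Real.exp 1 - 2) * Real.exp ((ns.sum : ℝ) - 2) * Real.exp 1 := by
      nlinarith
    rw [hsplit, hsplit2]
    nlinarith
  linarith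
end
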